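/- Let ξ be a random measure on a measure space (S, 𝒮, μ). If (ξ(A₁),…,ξ(Aₙ)) equals in distribution (ξ(B₁),…,ξ(Bₙ)) for any two families of pairwise disjoint measurable sets with μ(A_j)=μ(B_j) for all j, then ξ∘f⁻¹ and ξ∘g⁻¹ are equal in distribution for every two measurable functions f, g : S → ℝ₊ with μ∘f⁻¹ = μ∘g⁻¹. -/

import Mathlib

open MeasureTheory
open scoped ENNReal NNReal

namespace Stmt4Aux

variable {α : Type*} [MeasurableSpace α]

/-- The atoms of the Boolean algebra generated by a finite family of sets. -/
def atom {n : ℕ} (A : Fin n → Set α) (s : Fin n → Bool) : Set α :=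
  ⋂ i, if s i = true then A i else (A i)ᶜ

lemma atom_measurable {n : ℕ} {A : Fin n → Set α} (hA : ∀ i, MeasurableSet (A i))
    (s : Fin n → Bool) : MeasurableSet (atom A s) :=
  MeasurableSet.iInter fun i => by
    by_cases h : s i = true <;> simp [atom, h, hA i, (hA i).compl]

lemma atom_disjoint {n : ℕ} (A : Fin n → Set α) :
    Pairwise (Function.onFun Disjoint (atom A)) := by
  intro s t hst
  obtain ⟨i, hi⟩ := Function.ne_iff.mp hst
  refine Set.disjoint_left.mpr fun x hx hx' => ?_
  have h1 := Set.mem_iInter.mp hx i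
  have h2 := Set.mem_iInter.mp hx' i
  cases hs : s i <;> cases ht : t i <;> simp_all

lemma eq_biUnion_atoms {n : ℕ} (A : Fin n → Set α) (i : Fin n) :
    A i = ⋃ s ∈ Finset.univ.filter (fun s : Fin n → Bool => s i = true), atom A s := by
  classical
  ext x
  simp only [Set.mem_iUnion, Finset.mem_filter, Finset.mem_univ, true_and, exists_prop]
  constructor
  · intro hx
    refine ⟨fun j => decide (x ∈ A j), by simp [hx], ?_⟩
    simp only [atom, Set.mem_iInter]
    intro j
    by_cases h : x ∈ A j <;> simp [h]
  · rintro ⟨s, hsi, hx⟩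
    have := Set.mem_iInter.mp hx i
    simpa [hsi] using this

lemma measure_preimage_eq_sum {β : Type*} [MeasurableSpace β] (ν : Measure β)
    {f : β → α} (hf : Measurable f) {n : ℕ} {A : Fin n → Set α}
    (hA : ∀ i, MeasurableSet (A i)) (i : Fin n) :
    ν (f ⁻¹' A i) =
      ∑ s ∈ Finset.univ.filter (fun s : Fin n → Bool => s i = true),
        ν (f ⁻¹' atom A s) := by
  conv_lhs => rw [eq_biUnion_atoms A i]
  rw [Set.preimage_iUnion₂]
  rw [measure_biUnion_finset]
  · intro s _ t _ hst
    exact (atom_disjoint A hst).preimage f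
  · intro s _
    exact hf (atom_measurable hA s)

end Stmt4Aux

open Stmt4Aux

/-- Finite dimensional distributions of the pushforwards agree. -/
lemma stmt4_findim {Ω S : Type*} [MeasurableSpace Ω] [MeasurableSpace S]
    (P : Measure Ω) (μ : Measure S)
    (ξ : Ω → Measure S) (hξ : Measurable ξ)
    (hexch : ∀ (n : ℕ) (A B : Fin n → Set S),
      (∀ i, MeasurableSet (A i)) → (∀ i, MeasurableSet (B i)) →
      Pairwise (Function.onFun Disjoint A) → Pairwise (Function.onFun Disjoint B) →
      (∀ i, μ (A i) = μ (B i)) →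
      P.map (fun ω => fun i => ξ ω (A i)) = P.map (fun ω => fun i => ξ ω (B i)))
    (f g : S → NNReal) (hf : Measurable f) (hg : Measurable g)
    (hfg : μ.map f = μ.map g) (n : ℕ) (A : Fin n → Set NNReal)
    (hA : ∀ i, MeasurableSet (A i)) :
    P.map (fun ω => fun i => ξ ω (f ⁻¹' A i)) =
      P.map (fun ω => fun i => ξ ω (g ⁻¹' A i)) := by
  classical
  set m := Fintype.card (Fin n → Bool) with hm
  set e : Fin m ≃ (Fin n → Bool) := (Fintype.equivFin (Fin n → Bool)).symm with he
  -- the exchanged disjoint families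
  have hatomMeas : ∀ s, MeasurableSet (atom A s) := atom_measurable hA
  have hkey := hexch m (fun k => f ⁻¹' atom A (e k)) (fun k => g ⁻¹' atom A (e k))
    (fun k => hf (hatomMeas (e k))) (fun k => hg (hatomMeas (e k)))
    (fun k l hkl => (atom_disjoint A (fun h => hkl (e.injective h))).preimage f)
    (fun k l hkl => (atom_disjoint A (fun h => hkl (e.injective h))).preimage g)
    (fun k => by
      have h1 : μ (f ⁻¹' atom A (e k)) = (μ.map f) (atom A (e k)) :=
        (Measure.map_apply hf (hatomMeas (e k))).symm
      have h2 : μ (g ⁻¹' atom A (e k)) = (μ.map g) (atom A (e k)) :=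
        (Measure.map_apply hg (hatomMeas (e k))).symm
      rw [h1, h2, hfg])
  -- the summation map
  set T : (Fin m → ℝ≥0∞) → (Fin n → ℝ≥0∞) :=
    fun v i => ∑ k ∈ Finset.univ.filter (fun k : Fin m => e k i = true), v k with hT
  have hTmeas : Measurable T := by
    apply measurable_pi_lambda
    intro i
    exact Finset.measurable_sum _ fun k _ => measurable_pi_apply k
  have hcomp : ∀ (h : S → NNReal), Measurable h →
      (fun ω => fun i => ξ ω (h ⁻¹' A i)) =
        T ∘ (fun ω => fun k => ξ ω (h ⁻¹' atom A (e k))) := by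
    intro h hh
    funext ω
    funext i
    simp only [Function.comp_apply, hT]
    rw [measure_preimage_eq_sum (ξ ω) hh hA i]
    refine (Finset.sum_equiv e ?_ ?_).symm
    · intro k; simp
    · intro k _; rfl
  have hVmeas : ∀ (h : S → NNReal), Measurable h →
      Measurable (fun ω => fun k : Fin m => ξ ω (h ⁻¹' atom A (e k))) := by
    intro h hh
    apply measurable_pi_lambda
    intro k
    exact (Measure.measurable_coe (hh (hatomMeas (e k)))).comp hξ
  rw [hcomp f hf, hcomp g hg, ← Measure.map_map hTmeas (hVmeas f hf),
    ← Measure.map_map hTmeas (hVmeas g hg), hkey]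

theorem stmt_4 {Ω S : Type*} [MeasurableSpace Ω] [MeasurableSpace S]
    (P : Measure Ω) [IsProbabilityMeasure P] (μ : Measure S)
    (ξ : Ω → Measure S) (hξ : Measurable ξ)
    (hexch : ∀ (n : ℕ) (A B : Fin n → Set S),
      (∀ i, MeasurableSet (A i)) → (∀ i, MeasurableSet (B i)) →
      Pairwise (Function.onFun Disjoint A) → Pairwise (Function.onFun Disjoint B) →
      (∀ i, μ (A i) = μ (B i)) →
      P.map (fun ω => fun i => ξ ω (A i)) = P.map (fun ω => fun i => ξ ω (B i))) :
    ∀ f g : S → NNReal, Measurable f → Measurable g → μ.map f = μ.map g →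
      P.map (fun ω => (ξ ω).map f) = P.map (fun ω => (ξ ω).map g) := by
  classical
  intro f g hf hg hfg
  -- the π-system of cylinder sets on `Measure ℝ≥0`
  set C : Set (Set (Measure NNReal)) :=
    {E | ∃ (n : ℕ) (A : Fin n → Set NNReal) (D : Fin n → Set ℝ≥0∞),
      (∀ i, MeasurableSet (A i)) ∧ (∀ i, MeasurableSet (D i)) ∧
      E = {m | ∀ i, m (A i) ∈ D i}} with hC
  have hCmeas : ∀ E ∈ C, MeasurableSet E := by
    rintro E ⟨n, A, D, hA, hD, rfl⟩
    have : {m : Measure NNReal | ∀ i, m (A i) ∈ D i} =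
        ⋂ i, (fun m : Measure NNReal => m (A i)) ⁻¹' D i := by
      ext m; simp [Set.mem_iInter]
    rw [this]
    exact MeasurableSet.iInter fun i => Measure.measurable_coe (hA i) (hD i)
  have hpi : IsPiSystem C := by
    rintro E ⟨n, A, D, hA, hD, rfl⟩ E' ⟨n', A', D', hA', hD', rfl⟩ _
    refine ⟨n + n', Fin.append A A', Fin.append D D', ?_, ?_, ?_⟩
    · intro i
      refine Fin.addCases (fun j => ?_) (fun j => ?_) i
      · simpa using hA j
      · simpa using hA' j
    · intro i
      refine Fin.addCases (fun j => ?_) (fun j => ?_) i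
      · simpa using hD j
      · simpa using hD' j
    · ext m
      simp only [Set.mem_inter_iff, Set.mem_setOf_eq]
      constructor
      · rintro ⟨h1, h2⟩ i
        refine Fin.addCases (fun j => ?_) (fun j => ?_) i
        · simpa using h1 j
        · simpa using h2 j
      · intro h
        constructor
        · intro j; simpa using h (Fin.castAdd n' j)
        · intro j; simpa using h (Fin.natAdd n j)
  have hgen : (inferInstance : MeasurableSpace (Measure NNReal)) =
      MeasurableSpace.generateFrom C := by
    apply le_antisymm
    · rw [Measure.instMeasurableSpace]
      refine iSup₂_le fun s hs => ?_
      rw [MeasurableSpace.comap_le_iff_le_map]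
      intro D hD
      rw [MeasurableSpace.map_def]
      refine MeasurableSpace.measurableSet_generateFrom ?_
      refine ⟨1, fun _ => s, fun _ => D, fun _ => hs, fun _ => ?_, ?_⟩
      · rwa [← BorelSpace.measurable_eq (α := ℝ≥0∞)] at hD
      · ext m; simp
    · refine MeasurableSpace.generateFrom_le ?_
      exact hCmeas
  have hFf : Measurable fun ω => (ξ ω).map f := (Measure.measurable_map f hf).comp hξ
  have hFg : Measurable fun ω => (ξ ω).map g := (Measure.measurable_map g hg).comp hξ
  refine MeasureTheory.ext_of_generate_finite C hgen hpi ?_ ?_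
  · rintro E ⟨n, A, D, hA, hD, rfl⟩
    have hEmeas : MeasurableSet {m : Measure NNReal | ∀ i, m (A i) ∈ D i} :=
      hCmeas _ ⟨n, A, D, hA, hD, rfl⟩
    rw [Measure.map_apply hFf hEmeas, Measure.map_apply hFg hEmeas]
    have hpre : ∀ (h : S → NNReal), Measurable h →
        (fun ω => (ξ ω).map h) ⁻¹' {m | ∀ i, m (A i) ∈ D i} =
          (fun ω => fun i => ξ ω (h ⁻¹' A i)) ⁻¹' (Set.univ.pi D) := by
      intro h hh
      ext ω
      simp only [Set.mem_preimage, Set.mem_setOf_eq, Set.mem_univ_pi]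
      constructor <;> intro hw i <;>
        [rw [← Measure.map_apply hh (hA i)]; rw [Measure.map_apply hh (hA i)]] <;>
        exact hw i
    have hVf : Measurable fun ω => fun i => ξ ω (f ⁻¹' A i) :=
      measurable_pi_lambda _ fun i => (Measure.measurable_coe (hf (hA i))).comp hξ
    have hVg : Measurable fun ω => fun i => ξ ω (g ⁻¹' A i) :=
      measurable_pi_lambda _ fun i => (Measure.measurable_coe (hg (hA i))).comp hξ
    rw [hpre f hf, hpre g hg,
      ← Measure.map_apply hVf (MeasurableSet.univ_pi hD),
      ← Measure.map_apply hVg (MeasurableSet.univ_pi hD),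
      stmt4_findim P μ ξ hξ hexch f g hf hg hfg n A hA]
  · simp [Measure.map_apply hFf MeasurableSet.univ, Measure.map_apply hFg MeasurableSet.univ]
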